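/- arXiv:2010.04781 — 2 statements merged into one kernel-verified Lean document; each statement's English description precedes it below -/
import Mathlib

section
/- Let X ⊆ ℝ^n be nonempty closed convex, f convex differentiable with ‖∇f(w)‖ ≤ L for all w, a ∈ ℝ^m a stochastic vector, x^1,…,x^m ∈ ℝ^n, v = Σ_j a_j x^j, α > 0, d = ∇f(v), x⁺ = P_X[v − αd], and φ = x⁺ − v + αd. Then for all z ∈ X: ‖x⁺ − z‖² ≤ Σ_j a_j‖x^j − z‖² + α²‖d‖² − 2α(f(v) − f(z)) − ‖φ‖². -/
open InnerProductSpace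
set_option maxHeartbeats 1000000


theorem stmt_8 {m n : ℕ} (X : Set (EuclideanSpace ℝ (Fin n)))
    (hne : X.Nonempty) (hcl : IsClosed X) (hconv : Convex ℝ X)
    (f : EuclideanSpace ℝ (Fin n) → ℝ) (hf : ConvexOn ℝ Set.univ f)
    (g : EuclideanSpace ℝ (Fin n) → EuclideanSpace ℝ (Fin n))
    (hg : ∀ w, HasGradientAt f (g w) w)
    (L : ℝ) (hL : ∀ w, ‖g w‖ ≤ L)
    (a : Fin m → ℝ) (ha : ∀ j, 0 ≤ a j) (hsum : ∑ j, a j = 1)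
    (x : Fin m → EuclideanSpace ℝ (Fin n))
    (v : EuclideanSpace ℝ (Fin n)) (hv : v = ∑ j, a j • x j)
    (α : ℝ) (hα : 0 < α)
    (d : EuclideanSpace ℝ (Fin n)) (hd : d = g v)
    (xp : EuclideanSpace ℝ (Fin n)) (hxpX : xp ∈ X)
    (hproj : ∀ w ∈ X, dist (v - α • d) xp ≤ dist (v - α • d) w)
    (φ : EuclideanSpace ℝ (Fin n)) (hφ : φ = xp - v + α • d) :
    ∀ z ∈ X, ‖xp - z‖ ^ 2 ≤ ∑ j, a j * ‖x j - z‖ ^ 2 + α ^ 2 * ‖d‖ ^ 2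
      - 2 * α * (f v - f z) - ‖φ‖ ^ 2 := by
  intro z hz
  set y : EuclideanSpace ℝ (Fin n) := v - α • d with hy
  -- Step 1: projection characterization
  have hmin : ‖y - xp‖ = ⨅ w : X, ‖y - w‖ := by
    haveI : Nonempty X := ⟨⟨xp, hxpX⟩⟩
    have hbdd : BddBelow (Set.range fun w : X => ‖y - (w : EuclideanSpace ℝ (Fin n))‖) := by
      refine ⟨0, ?_⟩
      rintro r ⟨w, rfl⟩
      exact norm_nonneg _
    have hle1 : ‖y - xp‖ ≤ ⨅ w : X, ‖y - (w : EuclideanSpace ℝ (Fin n))‖ :=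
      le_ciInf fun w => by simpa [dist_eq_norm] using hproj w w.2
    have hle2 : (⨅ w : X, ‖y - (w : EuclideanSpace ℝ (Fin n))‖) ≤ ‖y - xp‖ :=
      ciInf_le hbdd (⟨xp, hxpX⟩ : X)
    exact le_antisymm hle1 hle2
  have hkey : ⟪y - xp, z - xp⟫_ℝ ≤ 0 :=
    ((norm_eq_iInf_iff_real_inner_le_zero hconv hxpX).mp hmin) z hz
  -- Step 2: basic projection inequality
  have hproj2 : ‖xp - z‖ ^ 2 ≤ ‖y - z‖ ^ 2 - ‖y - xp‖ ^ 2 := by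
    have hexp : ‖y - z‖ ^ 2 = ‖y - xp‖ ^ 2 + 2 * ⟪y - xp, xp - z⟫_ℝ + ‖xp - z‖ ^ 2 := by
      have := norm_add_sq_real (y - xp) (xp - z)
      have h1 : (y - xp) + (xp - z) = y - z := by abel
      rw [h1] at this; linarith
    have h2 : ⟪y - xp, xp - z⟫_ℝ = -⟪y - xp, z - xp⟫_ℝ := by
      rw [← inner_neg_right]; congr 1; abel
    nlinarith
  -- Step 3: expand ‖y - z‖²
  have hexp2 : ‖y - z‖ ^ 2 = ‖v - z‖ ^ 2 - 2 * α * ⟪d, v - z⟫_ℝ + α ^ 2 * ‖d‖ ^ 2 := by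
    have h1 : y - z = (v - z) - α • d := by rw [hy]; abel
    rw [h1, norm_sub_sq_real, inner_smul_right, norm_smul, real_inner_comm]
    simp [abs_of_pos hα, mul_pow]
    ring
  -- Step 6: ‖y - xp‖ = ‖φ‖
  have hphi : ‖y - xp‖ = ‖φ‖ := by
    have : φ = -(y - xp) := by rw [hφ, hy]; abel
    rw [this, norm_neg]
  -- Step 4: gradient inequality
  have hgrad : f v - f z ≤ ⟪d, v - z⟫_ℝ := by
    have hfd : HasFDerivAt f (InnerProductSpace.toDual ℝ _ (g v)) v := (hg v).hasFDerivAt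
    have hc : HasDerivAt (fun t : ℝ => v + t • (z - v)) (z - v) 0 := by
      simpa using ((hasDerivAt_id (0 : ℝ)).smul_const (z - v)).const_add v
    have hc0 : (fun t : ℝ => v + t • (z - v)) 0 = v := by simp
    have hcomp : HasDerivAt (fun t : ℝ => f (v + t • (z - v)))
        (⟪g v, z - v⟫_ℝ) 0 := by
      have hfd' : HasFDerivAt f (InnerProductSpace.toDual ℝ _ (g v))
          ((fun t : ℝ => v + t • (z - v)) 0) := by simpa using hfd
      have h := hfd'.comp_hasDerivAt 0 hc
      rw [InnerProductSpace.toDual_apply_apply] at h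
      exact h
    have hslope : Filter.Tendsto (slope (fun t : ℝ => f (v + t • (z - v))) 0)
        (nhdsWithin 0 (Set.Ioi 0 \ {0})) (nhds ⟪g v, z - v⟫_ℝ) := by
      have := (hcomp.hasDerivWithinAt (s := Set.Ioi (0 : ℝ)))
      rwa [hasDerivWithinAt_iff_tendsto_slope] at this
    have hev : ∀ᶠ t in nhdsWithin 0 (Set.Ioi (0 : ℝ) \ {0}),
        slope (fun t : ℝ => f (v + t • (z - v))) 0 t ≤ f z - f v := by
      have hmem : Set.Ioo (0:ℝ) 1 ∈ nhdsWithin 0 (Set.Ioi (0 : ℝ) \ {0}) :=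
        nhdsWithin_mono 0 Set.diff_subset (Ioo_mem_nhdsGT_of_mem ⟨le_refl 0, one_pos⟩)
      filter_upwards [hmem] with t ht
      have ht0 : (0 : ℝ) < t := ht.1
      have hconvf := hf.2 (Set.mem_univ v) (Set.mem_univ z)
        (by linarith [ht.2] : (0:ℝ) ≤ 1 - t) ht0.le (by ring)
      have heq : (1 - t) • v + t • z = v + t • (z - v) := by module
      rw [heq] at hconvf
      rw [slope_def_field]
      simp only [zero_smul, add_zero, sub_zero, smul_eq_mul] at *
      rw [div_le_iff₀ ht0]
      nlinarith
    have hsd : Set.Ioi (0:ℝ) \ {0} = Set.Ioi 0 := by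
      ext t
      simp only [Set.mem_diff, Set.mem_Ioi, Set.mem_singleton_iff, and_iff_left_iff_imp]
      intro h
      exact ne_of_gt h
    haveI : (nhdsWithin (0:ℝ) (Set.Ioi (0:ℝ) \ {0})).NeBot := by
      rw [hsd]; exact nhdsGT_neBot 0
    have hle : ⟪g v, z - v⟫_ℝ ≤ f z - f v := le_of_tendsto hslope hev
    have hneg : ⟪d, v - z⟫_ℝ = -⟪g v, z - v⟫_ℝ := by
      rw [hd, ← inner_neg_right]; congr 1; abel
    linarith
  -- Step 5: Jensen
  have hjensen : ‖v - z‖ ^ 2 ≤ ∑ j, a j * ‖x j - z‖ ^ 2 := by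
    have h1 : v - z = ∑ j, a j • (x j - z) := by
      rw [hv]
      have hzz : z = (∑ j, a j) • z := by rw [hsum, one_smul]
      rw [show (∑ j, a j • x j) - z = (∑ j, a j • x j) - (∑ j, a j) • z by rw [← hzz],
        Finset.sum_smul, ← Finset.sum_sub_distrib]
      exact Finset.sum_congr rfl fun j _ => by rw [smul_sub]
    have h2 : ‖v - z‖ ≤ ∑ j, a j * ‖x j - z‖ := by
      rw [h1]
      refine (norm_sum_le _ _).trans (le_of_eq ?_)
      exact Finset.sum_congr rfl fun j _ => by
        rw [norm_smul, Real.norm_eq_abs, abs_of_nonneg (ha j)]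
    calc ‖v - z‖ ^ 2 ≤ (∑ j, a j * ‖x j - z‖) ^ 2 :=
          pow_le_pow_left₀ (norm_nonneg _) h2 2
      _ ≤ ∑ j, a j * ‖x j - z‖ ^ 2 :=
          Real.pow_arith_mean_le_arith_mean_pow Finset.univ a (fun j => ‖x j - z‖)
            (fun j _ => ha j) hsum (fun j _ => norm_nonneg _) 2
  nlinarith [hproj2, hexp2, hphi, hgrad, hjensen, hα.le, norm_nonneg (y - xp)]
end

section
/- Let g : ℝ^n → ℝ be continuous, X ⊆ ℝ^n compact, and X* = {x ∈ X : g(x) = inf_{X} g} the (nonempty) set of minimizers. Suppose (y_k) is a sequence in X such that (i) liminf_k g(y_k) = inf_X g, and (ii) for every x* ∈ X*, the sequence ‖y_k − x*‖ converges. Then (y_k) converges to some point of X*. -/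
open Filter

theorem stmt_11 {n : ℕ} (g : EuclideanSpace ℝ (Fin n) → ℝ)
    (hg : Continuous g) (X : Set (EuclideanSpace ℝ (Fin n)))
    (hX : IsCompact X)
    (Xstar : Set (EuclideanSpace ℝ (Fin n)))
    (hXstar : Xstar = {x ∈ X | ∀ z ∈ X, g x ≤ g z})
    (hXsne : Xstar.Nonempty)
    (y : ℕ → EuclideanSpace ℝ (Fin n)) (hy : ∀ k, y k ∈ X)
    (hliminf : Filter.liminf (fun k => g (y k)) Filter.atTop = sInf (g '' X))
    (hdist : ∀ xs ∈ Xstar, ∃ c : ℝ,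
      Tendsto (fun k => ‖y k - xs‖) atTop (nhds c)) :
    ∃ xs ∈ Xstar, Tendsto y atTop (nhds xs) := by
  have hbdd : BddBelow (g '' X) := (hX.image hg).bddBelow
  have hlow : ∀ k, sInf (g '' X) ≤ g (y k) := fun k =>
    csInf_le hbdd ⟨y k, hy k, rfl⟩
  -- subsequence with g values tending to the infimum
  have hfreq : ∀ j : ℕ, ∃ᶠ k in atTop, g (y k) < sInf (g '' X) + 1 / (j + 1) := by
    intro j
    apply frequently_lt_of_liminf_lt
    · exact isCoboundedUnder_ge_of_eventually_le atTop (Eventually.of_forall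
        (fun k => le_csSup (hX.image hg).bddAbove ⟨y k, hy k, rfl⟩))
    · rw [hliminf]
      have : (0:ℝ) < 1 / (j + 1) := by positivity
      linarith
  obtain ⟨φ, hφmono, hφ⟩ := extraction_forall_of_frequently hfreq
  have hgφ : Tendsto (fun j => g (y (φ j))) atTop (nhds (sInf (g '' X))) := by
    have h1 : Tendsto (fun j : ℕ => sInf (g '' X) + 1 / (j + 1)) atTop
        (nhds (sInf (g '' X))) := by
      have : Tendsto (fun n : ℕ => 1 / ((n : ℝ) + 1)) atTop (nhds 0) :=
        tendsto_one_div_add_atTop_nhds_zero_nat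
      simpa using tendsto_const_nhds.add this
    exact tendsto_of_tendsto_of_tendsto_of_le_of_le tendsto_const_nhds h1
      (fun j => hlow (φ j)) (fun j => (hφ j).le)
  obtain ⟨x, hxX, ψ, hψmono, hψ⟩ := hX.tendsto_subseq (fun j => hy (φ j))
  have hgx : g x = sInf (g '' X) := by
    have h1 : Tendsto (fun j => g (y (φ (ψ j)))) atTop (nhds (g x)) :=
      (hg.tendsto x).comp hψ
    have h2 : Tendsto (fun j => g (y (φ (ψ j)))) atTop (nhds (sInf (g '' X))) :=
      hgφ.comp hψmono.tendsto_atTop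
    exact tendsto_nhds_unique h1 h2
  have hxstar : x ∈ Xstar := by
    rw [hXstar]
    exact ⟨hxX, fun z hz => hgx ▸ csInf_le hbdd ⟨z, hz, rfl⟩⟩
  obtain ⟨c, hc⟩ := hdist x hxstar
  have hc0 : c = 0 := by
    have h1 : Tendsto (fun j => ‖y (φ (ψ j)) - x‖) atTop (nhds c) :=
      hc.comp (hφmono.comp hψmono).tendsto_atTop
    have h2 : Tendsto (fun j => ‖y (φ (ψ j)) - x‖) atTop (nhds 0) := by
      have := hψ.sub_const x
      simpa using this.norm
    exact tendsto_nhds_unique h1 h2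
  refine ⟨x, hxstar, ?_⟩
  rw [tendsto_iff_norm_sub_tendsto_zero]
  exact hc0 ▸ hc
end
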